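/- arXiv:1801.02130 — 2 statements merged into one kernel-verified Lean document; each statement's English description precedes it below -/
import Mathlib

section
/- Let ρ : ℝ² → ℝ be differentiable at x, φ : ℝ² → ℝ have gradient ∇φ differentiable at x, and V : ℝ → ℝ be differentiable at ρ(x). Suppose the steady-state Hughes equation holds at x, i.e., the divergence of the flux F(y) = ρ(y) V(ρ(y))² ∇φ(y) vanishes at x, and suppose additionally Δφ(x) = 0. If V(ρ(x)) ≠ 0 and 2 ρ(x) V'(ρ(x)) + V(ρ(x)) ≠ 0, then ⟪∇ρ(x), ∇φ(x)⟫ = 0; that is, at such points the level curves of the density are perpendicular in gradient to the isopotential curves. -/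
open RealInnerProductSpace

noncomputable section

/-- The Euclidean plane `ℝ²`. -/
abbrev E2 : Type := EuclideanSpace ℝ (Fin 2)

/-- The divergence of a vector field `F : ℝ² → ℝ²` at a point `x`:
the trace of the Fréchet derivative of `F` at `x`. -/
def div2 (F : E2 → E2) (x : E2) : ℝ :=
  LinearMap.trace ℝ E2 (fderiv ℝ F x).toLinearMap

lemma trace_smulRight_aux (ℓ : E2 →L[ℝ] ℝ) (w : E2) :
    LinearMap.trace ℝ E2 (ℓ.smulRight w).toLinearMap = ℓ w := by
  have h : (ℓ.smulRight w).toLinearMap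
      = dualTensorHom ℝ E2 E2 ((ℓ.toLinearMap : Module.Dual ℝ E2) ⊗ₜ[ℝ] w) := by
    ext v
    simp [dualTensorHom_apply]
  rw [h, LinearMap.trace_eq_contract_apply, contractLeft_apply]
  rfl

/-- (Hughes' low free-flow density limit case.) If the steady-state
Hughes equation `div (ρ V(ρ)² ∇φ) = 0` holds at `x`, `Δφ(x) = 0`, `V(ρ(x)) ≠ 0`,
and `2 ρ(x) V'(ρ(x)) + V(ρ(x)) ≠ 0`, then `⟪∇ρ(x), ∇φ(x)⟫ = 0`: density gradients
are perpendicular to potential gradients. -/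
theorem hughes_low_density_limit (ρ φ : E2 → ℝ) (V : ℝ → ℝ) (x : E2)
    (hρ : DifferentiableAt ℝ ρ x)
    (hφ : DifferentiableAt ℝ (gradient φ) x)
    (hV : DifferentiableAt ℝ V (ρ x))
    (hdiv : div2 (fun y => (ρ y * (V (ρ y)) ^ 2) • gradient φ y) x = 0)
    (hlap : div2 (gradient φ) x = 0)
    (hV0 : V (ρ x) ≠ 0)
    (hcoef : 2 * ρ x * deriv V (ρ x) + V (ρ x) ≠ 0) :
    ⟪gradient ρ x, gradient φ x⟫ = 0 := by
  set L : E2 →L[ℝ] ℝ := fderiv ℝ ρ x with hL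
  set c : ℝ := V (ρ x) * (2 * ρ x * deriv V (ρ x) + V (ρ x)) with hc
  -- derivative of the scalar coefficient f y = ρ y * V (ρ y) ^ 2
  have hg : HasFDerivAt (fun y => V (ρ y)) (deriv V (ρ x) • L) x := by
    exact (hV.hasDerivAt.comp_hasFDerivAt x hρ.hasFDerivAt)
  have hg2 : HasFDerivAt (fun y => V (ρ y) ^ 2)
      ((2 * V (ρ x) * deriv V (ρ x)) • L) x := by
    have := (hg.fun_mul hg)
    have h2 : (fun y => V (ρ y) * V (ρ y)) = fun y => V (ρ y) ^ 2 := by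
      funext y; ring
    rw [h2] at this
    refine this.congr_fderiv ?_
    simp [smul_smul]
    module
  have hf : HasFDerivAt (fun y => ρ y * V (ρ y) ^ 2) (c • L) x := by
    have := hρ.hasFDerivAt.fun_mul hg2
    refine this.congr_fderiv ?_
    simp only [smul_smul]
    rw [show c = ρ x * (2 * V (ρ x) * deriv V (ρ x)) + V (ρ x) ^ 2 by rw [hc]; ring]
    module
  -- derivative of the flux
  have hF : HasFDerivAt (fun y => (ρ y * (V (ρ y)) ^ 2) • gradient φ y)
      ((ρ x * V (ρ x) ^ 2) • fderiv ℝ (gradient φ) x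
        + (c • L).smulRight (gradient φ x)) x :=
    hf.smul hφ.hasFDerivAt
  -- compute the divergence
  have hdiv' : div2 (fun y => (ρ y * (V (ρ y)) ^ 2) • gradient φ y) x
      = (ρ x * V (ρ x) ^ 2) * div2 (gradient φ) x + c * L (gradient φ x) := by
    rw [div2, hF.fderiv]
    push_cast
    rw [map_add]
    congr 1
    · rw [map_smul, smul_eq_mul, div2]
    · rw [trace_smulRight_aux]
      simp
  rw [hdiv, hlap, mul_zero, zero_add] at hdiv'
  have hinner : ⟪gradient ρ x, gradient φ x⟫ = L (gradient φ x) := by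
    exact InnerProductSpace.toDual_symm_apply
  have hc0 : c ≠ 0 := mul_ne_zero hV0 hcoef
  rw [hinner]
  have := (mul_eq_zero.mp hdiv'.symm).resolve_left hc0
  exact this
end
end

section
/- Let U ⊆ ℝ² be open, let Z : ℝ² → ℝ² be twice continuously differentiable on U with Jacobian J(z) = DZ(z) invertible for every z ∈ U, and let f : ℝ² → ℝ² be differentiable on an open set containing Z(U). Define the transformed (Piola) field P : U → ℝ² by P(z) = det J(z) • (J(z))⁻¹ (f(Z(z))). Then for every z ∈ U, div P(z) = det J(z) · (div f)(Z(z)), where the divergence of a differentiable vector field at a point is the trace of its Fréchet derivative there. -/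
noncomputable section

namespace Piola

def e (i : Fin 2) : E2 := EuclideanSpace.single i 1

lemma decomp (y : E2) : y = y 0 • e 0 + y 1 • e 1 := by
  ext i; fin_cases i <;> simp [e, EuclideanSpace.single_apply]

def bb : Module.Basis (Fin 2) ℝ E2 := (EuclideanSpace.basisFun (Fin 2) ℝ).toBasis

lemma trace_eq (A : E2 →ₗ[ℝ] E2) :
    LinearMap.trace ℝ E2 A = (A (e 0)) 0 + (A (e 1)) 1 := by
  rw [LinearMap.trace_eq_matrix_trace ℝ bb A, Matrix.trace_fin_two]
  simp [LinearMap.toMatrix_apply, bb, EuclideanSpace.basisFun_apply, e]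

lemma det_eq (A : E2 →ₗ[ℝ] E2) :
    LinearMap.det A = (A (e 0)) 0 * (A (e 1)) 1 - (A (e 1)) 0 * (A (e 0)) 1 := by
  rw [← LinearMap.det_toMatrix bb A, Matrix.det_fin_two]
  simp [LinearMap.toMatrix_apply, bb, EuclideanSpace.basisFun_apply, e]

lemma apply_coord (A : E2 →ₗ[ℝ] E2) (y : E2) (i : Fin 2) :
    (A y) i = y 0 * (A (e 0)) i + y 1 * (A (e 1)) i := by
  conv_lhs => rw [decomp y]
  simp

lemma apply_coord' (A : E2 →L[ℝ] E2) (y : E2) (i : Fin 2) :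
    (A y) i = y 0 * (A (e 0)) i + y 1 * (A (e 1)) i := by
  conv_lhs => rw [decomp y]
  simp

/-- Cayley–Hamilton in dimension 2. -/
lemma cayley (A : E2 →ₗ[ℝ] E2) (x : E2) :
    LinearMap.trace ℝ E2 A • A x - A (A x) = LinearMap.det A • x := by
  ext i
  rw [trace_eq, det_eq]
  have h1 := apply_coord A (A x) i
  have hi : ∀ j : Fin 2, j = 0 ∨ j = 1 := by decide
  rcases hi i with rfl | rfl <;>
    simp only [PiLp.sub_apply, PiLp.smul_apply, smul_eq_mul] <;>
    rw [h1] <;> rw [apply_coord A x 0, apply_coord A x 1] <;> ring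

/-- The trace as a continuous linear functional on `E2 →L[ℝ] E2`. -/
def Tr : (E2 →L[ℝ] E2) →L[ℝ] ℝ :=
  LinearMap.toContinuousLinearMap
    ((LinearMap.trace ℝ E2).comp (ContinuousLinearMap.coeLM ℝ))

lemma Tr_apply (A : E2 →L[ℝ] E2) : Tr A = LinearMap.trace ℝ E2 A.toLinearMap := rfl

/-- `det L • L⁻¹ = (tr L) • id - L` for bijective `L` in dimension 2. -/
lemma piola_rw (L : E2 →L[ℝ] E2) (hL : Function.Bijective L) (x : E2) :
    LinearMap.det L.toLinearMap • L.inverse x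
      = LinearMap.trace ℝ E2 L.toLinearMap • x - L x := by
  set eL := LinearEquiv.toContinuousLinearEquiv (LinearEquiv.ofBijective L.toLinearMap hL)
    with heL
  have hLe : L = (eL : E2 →L[ℝ] E2) := by ext v; rfl
  have hinv : L.inverse = (eL.symm : E2 →L[ℝ] E2) := by
    rw [hLe]; exact ContinuousLinearMap.inverse_equiv eL
  apply hL.injective
  rw [hinv, map_smul, map_sub, map_smul]
  have h1 : L ((eL.symm : E2 →L[ℝ] E2) x) = x := by
    conv_lhs => rw [hLe]
    exact eL.apply_symm_apply x
  rw [h1]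
  exact (cayley L.toLinearMap x).symm

/-- The final trace computation. -/
lemma final_calc (Jz M : E2 →L[ℝ] E2) (B : E2 →L[ℝ] E2 →L[ℝ] E2) (gz : E2)
    (hsym : ∀ v w : E2, B v w = B w v) :
    LinearMap.trace ℝ E2 ((Tr Jz • (M.comp Jz) + (Tr.comp B).smulRight gz
      - (Jz.comp (M.comp Jz) + (B.flip gz))).toLinearMap)
    = LinearMap.det Jz.toLinearMap * LinearMap.trace ℝ E2 M.toLinearMap := by
  rw [trace_eq, det_eq, trace_eq]
  simp only [ContinuousLinearMap.coe_coe, ContinuousLinearMap.sub_apply,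
    ContinuousLinearMap.add_apply, ContinuousLinearMap.smul_apply,
    ContinuousLinearMap.comp_apply, ContinuousLinearMap.smulRight_apply,
    ContinuousLinearMap.flip_apply, PiLp.sub_apply, PiLp.add_apply,
    PiLp.smul_apply, smul_eq_mul, Tr_apply, trace_eq]
  rw [apply_coord' Jz (M (Jz (e 0))) 0, apply_coord' Jz (M (Jz (e 1))) 1,
    apply_coord' M (Jz (e 0)) 0, apply_coord' M (Jz (e 0)) 1,
    apply_coord' M (Jz (e 1)) 0, apply_coord' M (Jz (e 1)) 1,
    apply_coord' (B (e 0)) gz 0, apply_coord' (B (e 1)) gz 1]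
  have hs01 : ∀ i : Fin 2, (B (e 0) (e 1)) i = (B (e 1) (e 0)) i := by
    intro i; rw [hsym]
  rw [hs01 0, hs01 1]
  ring

end Piola

open Piola Topology


/-- (Piola identity.) Let `Z : ℝ² → ℝ²` be `C²` on an open set `U`
with everywhere invertible Jacobian `J(z) = DZ(z)`, and let `f` be differentiable on
an open set `W ⊇ Z(U)`. Then the Piola transform
`P(z) = det J(z) • J(z)⁻¹ (f (Z z))` satisfies
`div P (z) = det J(z) · (div f) (Z z)` for all `z ∈ U`. -/
theorem piola_identity (U W : Set E2) (hU : IsOpen U) (hW : IsOpen W)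
    (Z f : E2 → E2) (hZ : ContDiffOn ℝ 2 Z U)
    (hJ : ∀ z ∈ U, Function.Bijective (fderiv ℝ Z z))
    (hZW : Z '' U ⊆ W) (hf : DifferentiableOn ℝ f W) :
    ∀ z ∈ U,
      div2 (fun w =>
          LinearMap.det (fderiv ℝ Z w).toLinearMap •
            (fderiv ℝ Z w).inverse (f (Z w))) z =
        LinearMap.det (fderiv ℝ Z z).toLinearMap * div2 f (Z z) := by
  intro z hz
  have hzU : U ∈ 𝓝 z := hU.mem_nhds hz
  have hZ2 : ContDiffAt ℝ 2 Z z := hZ.contDiffAt hzU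
  have hJ1 : ContDiffAt ℝ 1 (fderiv ℝ Z) z := hZ2.fderiv_right (le_refl 2)
  have hBd : DifferentiableAt ℝ (fderiv ℝ Z) z := hJ1.differentiableAt one_ne_zero
  set B := fderiv ℝ (fderiv ℝ Z) z with hBdef
  have hB : HasFDerivAt (fderiv ℝ Z) B z := hBd.hasFDerivAt
  have hsym : ∀ v w, B v w = B w v := fun v w => (hZ2.isSymmSndFDerivAt (by simp [minSmoothness_of_isRCLikeNormedField])) v w
  have hfz : DifferentiableAt ℝ f (Z z) :=
    hf.differentiableAt (hW.mem_nhds (hZW ⟨z, hz, rfl⟩))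
  set M := fderiv ℝ f (Z z) with hMdef
  set Jz := fderiv ℝ Z z with hJzdef
  have hZdz : DifferentiableAt ℝ Z z := hZ2.differentiableAt two_ne_zero
  have hgd : HasFDerivAt (fun w => f (Z w)) (M.comp Jz) z :=
    hfz.hasFDerivAt.comp z hZdz.hasFDerivAt
  have hTrJ : HasFDerivAt (fun w => Tr (fderiv ℝ Z w)) (Tr.comp B) z :=
    Tr.hasFDerivAt.comp z hB
  have h1 : HasFDerivAt (fun w => Tr (fderiv ℝ Z w) • f (Z w))
      (Tr Jz • (M.comp Jz) + (Tr.comp B).smulRight (f (Z z))) z := hTrJ.smul hgd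
  have h2 : HasFDerivAt (fun w => (fderiv ℝ Z w) (f (Z w)))
      (Jz.comp (M.comp Jz) + B.flip (f (Z z))) z := hB.clm_apply hgd
  have hQ : HasFDerivAt (fun w => Tr (fderiv ℝ Z w) • f (Z w) - (fderiv ℝ Z w) (f (Z w)))
      (Tr Jz • (M.comp Jz) + (Tr.comp B).smulRight (f (Z z))
        - (Jz.comp (M.comp Jz) + B.flip (f (Z z)))) z := h1.sub h2
  have hPQ : (fun w => LinearMap.det (fderiv ℝ Z w).toLinearMap •
        (fderiv ℝ Z w).inverse (f (Z w)))
      =ᶠ[𝓝 z] (fun w => Tr (fderiv ℝ Z w) • f (Z w) - (fderiv ℝ Z w) (f (Z w))) := by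
    filter_upwards [hzU] with w hw
    rw [piola_rw _ (hJ w hw), Tr_apply]
  have hP : HasFDerivAt (fun w => LinearMap.det (fderiv ℝ Z w).toLinearMap •
        (fderiv ℝ Z w).inverse (f (Z w)))
      (Tr Jz • (M.comp Jz) + (Tr.comp B).smulRight (f (Z z))
        - (Jz.comp (M.comp Jz) + B.flip (f (Z z)))) z :=
    hQ.congr_of_eventuallyEq hPQ
  unfold div2
  rw [hP.fderiv, ← hMdef]
  exact final_calc Jz M B (f (Z z)) hsym
end
end
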